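/- Let B be a k×d matrix whose columns all have Euclidean norm 1, and let D be a random d×d diagonal matrix with i.i.d. ±1 diagonal entries. There exist universal constants c₅, c₆ > 0 such that for any unit vector x ∈ R^d and any t ≥ 0, P(|‖B D x‖₂ − 1| > t) ≤ c₅ · exp(−c₆ t² / (‖x‖₄² · ‖B^T‖²_{2→4})). -/

import Mathlib

open Real Finset

/-- The sign `±1` associated to a Boolean. -/
def sgn (b : Bool) : ℝ := if b then 1 else -1

/-- The `2 → 4` operator norm of `Bᵀ`: `sup_{‖y‖₂ = 1} ‖Bᵀ y‖₄`. -/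
noncomputable def norm24 {k d : ℕ} (B : Matrix (Fin k) (Fin d) ℝ) : ℝ :=
  sSup {r : ℝ | ∃ y : Fin k → ℝ, ∑ i, y i ^ 2 = 1 ∧
    r = (∑ j, (∑ i, B i j * y i) ^ 4) ^ ((1 : ℝ) / 4)}


namespace BDXaux

variable {d k : ℕ}

/-- sign vector -/
def ev (ε : Fin d → Bool) (j : Fin d) : ℝ := sgn (ε j)

lemma ev_mul_self (ε : Fin d → Bool) (j : Fin d) : ev ε j * ev ε j = 1 := by
  unfold ev sgn; cases ε j <;> norm_num

/-- flip one coordinate -/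
def flip (j : Fin d) (δ : Fin d → Bool) : Fin d → Bool := Function.update δ j (!δ j)

lemma flip_invol (j : Fin d) : Function.Involutive (flip j) := by
  intro δ; funext i
  by_cases h : i = j
  · subst h; simp [flip]
  · simp [flip, Function.update_of_ne h]

lemma sum_flip (j : Fin d) (f : (Fin d → Bool) → ℝ) :
    ∑ δ : Fin d → Bool, f δ = ∑ δ : Fin d → Bool, f (flip j δ) :=
  (Fintype.sum_bijective (flip j) (flip_invol j).bijective _ _ (fun _ => rfl)).symm

lemma card_cube : ((Fintype.card (Fin d → Bool) : ℝ)) = 2 ^ d := by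
  simp [Fintype.card_fun]

/-- real indicator of a Bool -/
def ind (b : Bool) : ℝ := if b then 1 else 0

lemma sum_ev_zero (j : Fin d) : ∑ η : Fin d → Bool, ev η j = 0 := by
  have h := sum_flip j (fun η => ev η j)
  have h2 : ∀ η : Fin d → Bool, ev (flip j η) j = - ev η j := by
    intro η; unfold ev flip sgn; rw [Function.update_self]; cases η j <;> norm_num
  have : (2:ℝ) * ∑ η : Fin d → Bool, ev η j = 0 := by
    rw [two_mul]
    nth_rewrite 2 [h]
    rw [← Finset.sum_add_distrib]
    simp [h2]
  linarith

lemma sum_ind_not (j : Fin d) :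
    (2:ℝ) * ∑ δ : Fin d → Bool, ind (!δ j) = 2 ^ d := by
  have h := sum_flip j (fun δ => ind (!δ j))
  have h2 : ∀ δ : Fin d → Bool, ind (!(flip j δ) j) = ind (δ j) := by
    intro δ; unfold ind flip; rw [Function.update_self]; cases δ j <;> norm_num
  rw [two_mul]
  nth_rewrite 2 [h]
  rw [← Finset.sum_add_distrib]
  have h3 : ∀ δ : Fin d → Bool, ind (!δ j) + ind (!(flip j δ) j) = 1 := by
    intro δ; rw [h2]; unfold ind; cases δ j <;> norm_num
  rw [Finset.sum_congr rfl (fun δ _ => h3 δ)]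
  simp [card_univ, Fintype.card_fun]

lemma cnt (j j' : Fin d) :
    (4:ℝ) * ∑ δ : Fin d → Bool, ind (δ j) * ind (!δ j')
      = if j = j' then 0 else 2 ^ d := by
  by_cases h : j = j'
  · subst h; simp only [if_pos rfl]
    have : ∀ δ : Fin d → Bool, ind (δ j) * ind (!δ j) = 0 := by
      intro δ; unfold ind; cases δ j <;> norm_num
    rw [Finset.sum_congr rfl (fun δ _ => this δ)]; simp
  · rw [if_neg h]
    have hflip := sum_flip j (fun δ => ind (δ j) * ind (!δ j'))
    have h2 : ∀ δ : Fin d → Bool,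
        ind ((flip j δ) j) * ind (!(flip j δ) j') = ind (!δ j) * ind (!δ j') := by
      intro δ
      have e1 : (flip j δ) j = !δ j := Function.update_self _ _ _
      have e2 : (flip j δ) j' = δ j' := Function.update_of_ne (fun hc => h hc.symm) _ _
      rw [e1, e2]
    have key : (2:ℝ) * ∑ δ : Fin d → Bool, ind (δ j) * ind (!δ j')
        = ∑ δ : Fin d → Bool, ind (!δ j') := by
      rw [two_mul]
      nth_rewrite 2 [hflip]
      rw [← Finset.sum_add_distrib]
      refine Finset.sum_congr rfl fun δ _ => ?_
      rw [h2 δ]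
      unfold ind; cases δ j <;> cases δ j' <;> norm_num
    have := sum_ind_not (d := d) j'
    nlinarith [this, key]



/-- merge two boolean vectors along δ -/
def mg (δ a b : Fin d → Bool) : Fin d → Bool := fun i => if δ i then a i else b i

lemma mg_invol (δ : Fin d → Bool) :
    Function.Involutive (fun p : (Fin d → Bool) × (Fin d → Bool) =>
      (mg δ p.1 p.2, mg δ p.2 p.1)) := by
  intro p
  refine Prod.ext ?_ ?_ <;> funext i <;> by_cases h : δ i <;> simp [mg, h]

lemma sum_merge (δ : Fin d → Bool) (g : (Fin d → Bool) → ℝ) :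
    ∑ p : (Fin d → Bool) × (Fin d → Bool), g (mg δ p.1 p.2)
      = 2 ^ d * ∑ u, g u := by
  have h := Fintype.sum_bijective _ (mg_invol δ).bijective
    (fun p : (Fin d → Bool) × (Fin d → Bool) => g (mg δ p.1 p.2))
    (fun p : (Fin d → Bool) × (Fin d → Bool) => g p.1) (fun p => rfl)
  rw [h, Fintype.sum_prod_type]
  have hc : ∀ a : Fin d → Bool, ∑ _b : Fin d → Bool, g a = 2 ^ d * g a := by
    intro a
    rw [Finset.sum_const, card_univ]
    simp only [Fintype.card_fun, Fintype.card_bool, Fintype.card_fin, nsmul_eq_mul,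
      Nat.cast_pow, Nat.cast_ofNat]
  rw [Finset.sum_congr rfl (fun a _ => hc a), ← Finset.mul_sum]

/-- Jensen for exp over a finite average -/
lemma exp_avg_le {ι : Type*} [Fintype ι] [Nonempty ι] (f : ι → ℝ) :
    (Fintype.card ι : ℝ) * Real.exp ((∑ i, f i) / (Fintype.card ι)) ≤ ∑ i, Real.exp (f i) := by
  have hcard : (0:ℝ) < (Fintype.card ι : ℝ) := by
    exact_mod_cast Fintype.card_pos
  have h := convexOn_exp.map_sum_le (t := (univ : Finset ι))
    (w := fun _ : ι => (Fintype.card ι : ℝ)⁻¹) (p := f)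
    (fun i _ => by positivity)
    (by rw [Finset.sum_const, card_univ, nsmul_eq_mul]; field_simp)
    (fun i _ => Set.mem_univ _)
  simp only [smul_eq_mul] at h
  rw [← Finset.mul_sum] at h
  have h2 : (∑ i, f i) / (Fintype.card ι : ℝ) = (Fintype.card ι : ℝ)⁻¹ * ∑ i, f i := by
    rw [div_eq_inv_mul]
  rw [h2]
  calc (Fintype.card ι : ℝ) * Real.exp ((Fintype.card ι : ℝ)⁻¹ * ∑ i, f i)
      ≤ (Fintype.card ι : ℝ) * ∑ i, (Fintype.card ι : ℝ)⁻¹ * Real.exp (f i) := by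
        exact mul_le_mul_of_nonneg_left h (le_of_lt hcard)
    _ = ∑ i, Real.exp (f i) := by
        rw [← Finset.mul_sum]; field_simp

/-- Hoeffding-type bound for a linear form over the cube -/
lemma sum_exp_linear (w : Fin d → ℝ) :
    ∑ u : Fin d → Bool, Real.exp (∑ j, w j * ev u j)
      ≤ 2 ^ d * Real.exp ((∑ j, w j ^ 2) / 2) := by
  have key : ∀ F : Fin d → Bool → ℝ,
      ∑ u : Fin d → Bool, ∏ j, F j (u j) = ∏ j, ∑ b, F j b := by
    intro F
    rw [← Fintype.piFinset_univ, ← Finset.prod_univ_sum]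
  have hfact : ∑ u : Fin d → Bool, Real.exp (∑ j, w j * ev u j)
      = ∏ j, (Real.exp (w j) + Real.exp (-w j)) := by
    calc ∑ u : Fin d → Bool, Real.exp (∑ j, w j * ev u j)
        = ∑ u : Fin d → Bool, ∏ j, Real.exp (w j * (if u j then (1:ℝ) else -1)) :=
          Finset.sum_congr rfl fun u _ => by rw [Real.exp_sum]; rfl
      _ = ∏ j, ∑ b : Bool, Real.exp (w j * (if b then (1:ℝ) else -1)) :=
          key fun j b => Real.exp (w j * (if b then (1:ℝ) else -1))
      _ = ∏ j, (Real.exp (w j) + Real.exp (-w j)) := by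
          refine Finset.prod_congr rfl fun j _ => ?_
          rw [Fintype.sum_bool]
          simp [mul_one, mul_neg_one]
  rw [hfact]
  have hcosh : ∀ j : Fin d, Real.exp (w j) + Real.exp (-w j) ≤ 2 * Real.exp (w j ^ 2 / 2) := by
    intro j
    have := Real.cosh_le_exp_half_sq (w j)
    rw [Real.cosh_eq] at this
    linarith
  calc ∏ j, (Real.exp (w j) + Real.exp (-w j))
      ≤ ∏ j : Fin d, 2 * Real.exp (w j ^ 2 / 2) := by
        refine Finset.prod_le_prod (fun j _ => by positivity) (fun j _ => hcosh j)
    _ = 2 ^ d * Real.exp ((∑ j, w j ^ 2) / 2) := by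
        rw [Finset.prod_mul_distrib, Finset.prod_const, ← Real.exp_sum, card_univ]
        simp [Finset.sum_div]



variable {k : ℕ}

def Qv (M : Fin k → Fin d → ℝ) (u : Fin d → Bool) : ℝ := ∑ i, (∑ j, M i j * ev u j) ^ 2

def Am (M : Fin k → Fin d → ℝ) (j j' : Fin d) : ℝ := ∑ i, M i j * M i j'

def Cf (M : Fin k → Fin d → ℝ) (u u' : Fin d → Bool) : ℝ :=
  ∑ j, ∑ j', Am M j j' * (ev u j * ev u' j')

def Bf (M : Fin k → Fin d → ℝ) (δ u u' : Fin d → Bool) : ℝ :=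
  ∑ j, ∑ j', Am M j j' * (ind (δ j) * ind (!δ j')) * (ev u j * ev u' j')

lemma Q_eq_C (M : Fin k → Fin d → ℝ) (u : Fin d → Bool) : Qv M u = Cf M u u := by
  unfold Qv Cf Am
  simp_rw [sq, Finset.sum_mul_sum, Finset.sum_mul]
  rw [Finset.sum_comm]
  refine Finset.sum_congr rfl fun j _ => ?_
  rw [Finset.sum_comm]
  exact Finset.sum_congr rfl fun j' _ => Finset.sum_congr rfl (fun i _ => by ring)

lemma sum_offdiag (F : Fin d → ℝ) (j : Fin d) :
    ∑ j', (if j = j' then (0:ℝ) else F j') = (∑ j', F j') - F j := by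
  have h : ∀ j' : Fin d, (if j = j' then (0:ℝ) else F j')
      = F j' - (if j = j' then F j' else 0) := by
    intro j'; by_cases h : j = j' <;> simp [h]
  rw [Finset.sum_congr rfl fun j' _ => h j', Finset.sum_sub_distrib, Finset.sum_ite_eq,
    if_pos (Finset.mem_univ j)]

lemma key1 (M : Fin k → Fin d → ℝ) (htr : ∑ j, Am M j j = 1) (u : Fin d → Bool) :
    ∑ δ : Fin d → Bool, (4 * Bf M δ u u) = 2 ^ d * (Qv M u - 1) := by
  have hL : ∑ δ : Fin d → Bool, (4 * Bf M δ u u)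
      = ∑ j, ∑ j', (if j = j' then (0:ℝ) else 2 ^ d * (Am M j j' * (ev u j * ev u j'))) := by
    unfold Bf
    simp_rw [Finset.mul_sum]
    rw [Finset.sum_comm]
    refine Finset.sum_congr rfl fun j _ => ?_
    rw [Finset.sum_comm]
    refine Finset.sum_congr rfl fun j' _ => ?_
    have hterm : ∀ δ : Fin d → Bool,
        4 * (Am M j j' * (ind (δ j) * ind (!δ j')) * (ev u j * ev u j'))
        = (Am M j j' * (ev u j * ev u j')) * (4 * (ind (δ j) * ind (!δ j'))) := fun δ => by ring
    rw [Finset.sum_congr rfl fun δ _ => hterm δ, ← Finset.mul_sum, ← Finset.mul_sum, cnt j j']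
    by_cases h : j = j' <;> simp [h] <;> ring
  rw [hL]
  have hR : ∀ j : Fin d,
      ∑ j', (if j = j' then (0:ℝ) else 2 ^ d * (Am M j j' * (ev u j * ev u j')))
      = (∑ j', 2 ^ d * (Am M j j' * (ev u j * ev u j'))) - 2 ^ d * (Am M j j * (ev u j * ev u j)) :=
    fun j => sum_offdiag _ j
  rw [Finset.sum_congr rfl fun j _ => hR j, Finset.sum_sub_distrib]
  have h1 : ∑ j, ∑ j', 2 ^ d * (Am M j j' * (ev u j * ev u j')) = 2 ^ d * Cf M u u := by
    unfold Cf; rw [Finset.mul_sum]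
    exact Finset.sum_congr rfl fun j _ => by rw [Finset.mul_sum]
  have h2 : ∑ j, 2 ^ d * (Am M j j * (ev u j * ev u j)) = 2 ^ d := by
    have : ∀ j : Fin d, 2 ^ d * (Am M j j * (ev u j * ev u j)) = 2 ^ d * Am M j j := by
      intro j; rw [ev_mul_self]; ring
    rw [Finset.sum_congr rfl fun j _ => this j, ← Finset.mul_sum, htr, mul_one]
  rw [h1, h2, Q_eq_C]
  ring

lemma sum_ev_mg_left (δ u : Fin d → Bool) (j : Fin d) :
    ∑ η : Fin d → Bool, ev (mg δ u η) j = ind (δ j) * (2 ^ d * ev u j) := by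
  by_cases h : δ j
  · have he : ∀ η : Fin d → Bool, ev (mg δ u η) j = ev u j := by
      intro η; show sgn (if δ j then u j else η j) = _; rw [if_pos h]; rfl
    rw [Finset.sum_congr rfl fun η _ => he η, Finset.sum_const, card_univ, nsmul_eq_mul]
    simp only [Fintype.card_fun, Fintype.card_bool, Fintype.card_fin, Nat.cast_pow,
      Nat.cast_ofNat, ind, if_pos h]
    ring
  · have he : ∀ η : Fin d → Bool, ev (mg δ u η) j = ev η j := by
      intro η; show sgn (if δ j then u j else η j) = _; rw [if_neg h]; rfl
    rw [Finset.sum_congr rfl fun η _ => he η, sum_ev_zero]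
    simp [ind, h]

lemma sum_ev_mg_right (δ u' : Fin d → Bool) (j' : Fin d) :
    ∑ η : Fin d → Bool, ev (mg δ η u') j' = ind (!δ j') * (2 ^ d * ev u' j') := by
  by_cases h : δ j'
  · have he : ∀ η : Fin d → Bool, ev (mg δ η u') j' = ev η j' := by
      intro η; show sgn (if δ j' then η j' else u' j') = _; rw [if_pos h]; rfl
    rw [Finset.sum_congr rfl fun η _ => he η, sum_ev_zero]
    simp [ind, h]
  · have he : ∀ η : Fin d → Bool, ev (mg δ η u') j' = ev u' j' := by
      intro η; show sgn (if δ j' then η j' else u' j') = _; rw [if_neg h]; rfl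
    rw [Finset.sum_congr rfl fun η _ => he η, Finset.sum_const, card_univ, nsmul_eq_mul]
    simp only [Fintype.card_fun, Fintype.card_bool, Fintype.card_fin, Nat.cast_pow,
      Nat.cast_ofNat, ind, h]
    norm_num

lemma key2 (M : Fin k → Fin d → ℝ) (δ u u' : Fin d → Bool) :
    ∑ q : (Fin d → Bool) × (Fin d → Bool), Cf M (mg δ u q.1) (mg δ q.2 u')
      = (2 ^ d * 2 ^ d) * Bf M δ u u' := by
  unfold Cf Bf
  rw [Fintype.sum_prod_type]
  have hswap : ∑ η : Fin d → Bool, ∑ η' : Fin d → Bool,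
      ∑ j, ∑ j', Am M j j' * (ev (mg δ u η) j * ev (mg δ η' u') j')
      = ∑ j, ∑ j', ∑ η : Fin d → Bool, ∑ η' : Fin d → Bool,
        Am M j j' * (ev (mg δ u η) j * ev (mg δ η' u') j') := by
    calc ∑ η : Fin d → Bool, ∑ η' : Fin d → Bool,
        ∑ j, ∑ j', Am M j j' * (ev (mg δ u η) j * ev (mg δ η' u') j')
        = ∑ η : Fin d → Bool, ∑ j, ∑ η' : Fin d → Bool,
            ∑ j', Am M j j' * (ev (mg δ u η) j * ev (mg δ η' u') j') :=
          Finset.sum_congr rfl fun η _ => Finset.sum_comm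
      _ = ∑ j, ∑ η : Fin d → Bool, ∑ η' : Fin d → Bool,
            ∑ j', Am M j j' * (ev (mg δ u η) j * ev (mg δ η' u') j') :=
          Finset.sum_comm
      _ = ∑ j, ∑ η : Fin d → Bool, ∑ j', ∑ η' : Fin d → Bool,
            Am M j j' * (ev (mg δ u η) j * ev (mg δ η' u') j') :=
          Finset.sum_congr rfl fun j _ => Finset.sum_congr rfl fun η _ => Finset.sum_comm
      _ = ∑ j, ∑ j', ∑ η : Fin d → Bool, ∑ η' : Fin d → Bool,
            Am M j j' * (ev (mg δ u η) j * ev (mg δ η' u') j') :=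
          Finset.sum_congr rfl fun j _ => Finset.sum_comm
  rw [hswap, Finset.mul_sum]
  refine Finset.sum_congr rfl fun j _ => ?_
  rw [Finset.mul_sum]
  refine Finset.sum_congr rfl fun j' _ => ?_
  have hfac : ∑ η : Fin d → Bool, ∑ η' : Fin d → Bool,
      Am M j j' * (ev (mg δ u η) j * ev (mg δ η' u') j')
      = Am M j j' * ((∑ η : Fin d → Bool, ev (mg δ u η) j)
          * (∑ η' : Fin d → Bool, ev (mg δ η' u') j')) := by
    rw [Finset.sum_mul_sum, Finset.mul_sum]
    refine Finset.sum_congr rfl fun η _ => ?_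
    rw [Finset.mul_sum]
  rw [hfac, sum_ev_mg_left, sum_ev_mg_right]
  ring

lemma key3 (M : Fin k → Fin d → ℝ) (δ a b : Fin d → Bool) :
    Bf M δ (mg δ a b) (mg δ a b) = Bf M δ a b := by
  unfold Bf
  refine Finset.sum_congr rfl fun j _ => Finset.sum_congr rfl fun j' _ => ?_
  by_cases hj : δ j <;> by_cases hj' : δ j' <;>
    simp [ind, ev, mg, sgn, hj, hj']

lemma sum_Am_ev (M : Fin k → Fin d → ℝ) (u : Fin d → Bool) (j' : Fin d) :
    ∑ j, Am M j j' * ev u j = ∑ i, M i j' * (∑ j, M i j * ev u j) := by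
  unfold Am
  simp_rw [Finset.sum_mul, Finset.mul_sum]
  rw [Finset.sum_comm]
  exact Finset.sum_congr rfl fun i _ => Finset.sum_congr rfl fun j _ => by ring


lemma stepA (M : Fin k → Fin d → ℝ) (htr : ∑ j, Am M j j = 1)
    (σ2 : ℝ) (hσ2 : 0 ≤ σ2)
    (hσ : ∀ u : Fin d → Bool, ∑ j', (∑ j, Am M j j' * ev u j) ^ 2 ≤ σ2 * Qv M u)
    (l : ℝ) :
    ∑ u : Fin d → Bool, Real.exp (l * (Qv M u - 1))
      ≤ Real.exp (8 * l ^ 2 * σ2)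
        * ∑ u : Fin d → Bool, Real.exp (8 * l ^ 2 * σ2 * (Qv M u - 1)) := by
  have hn0 : (0:ℝ) < 2 ^ d := by positivity
  -- L1 : pointwise Jensen introducing the δ-average
  have L1 : ∀ u : Fin d → Bool, (2:ℝ) ^ d * Real.exp (l * (Qv M u - 1))
      ≤ ∑ δ : Fin d → Bool, Real.exp (4 * l * Bf M δ u u) := by
    intro u
    have hsum : ∑ δ : Fin d → Bool, 4 * l * Bf M δ u u = l * ((2:ℝ) ^ d * (Qv M u - 1)) := by
      have h1 : ∑ δ : Fin d → Bool, 4 * l * Bf M δ u u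
          = l * ∑ δ : Fin d → Bool, 4 * Bf M δ u u := by
        rw [Finset.mul_sum]; exact Finset.sum_congr rfl fun δ _ => by ring
      rw [h1, key1 M htr u]
    have h := exp_avg_le (fun δ : Fin d → Bool => 4 * l * Bf M δ u u)
    rw [card_cube, hsum] at h
    have harg : l * ((2:ℝ) ^ d * (Qv M u - 1)) / 2 ^ d = l * (Qv M u - 1) := by
      field_simp
    rw [harg] at h
    exact h
  -- L3 : pointwise Jensen for decoupling
  have L3 : ∀ δ ε ε' : Fin d → Bool, ((2:ℝ) ^ d * 2 ^ d) * Real.exp (4 * l * Bf M δ ε ε')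
      ≤ ∑ η : Fin d → Bool, ∑ η' : Fin d → Bool,
          Real.exp (4 * l * Cf M (mg δ ε η) (mg δ η' ε')) := by
    intro δ ε ε'
    have h := exp_avg_le (ι := (Fin d → Bool) × (Fin d → Bool))
      (fun q => 4 * l * Cf M (mg δ ε q.1) (mg δ q.2 ε'))
    have hcard : ((Fintype.card ((Fin d → Bool) × (Fin d → Bool)) : ℝ)) = (2:ℝ) ^ d * 2 ^ d := by
      rw [Fintype.card_prod]
      push_cast
      rw [card_cube]
    have hsum : ∑ q : (Fin d → Bool) × (Fin d → Bool),
        4 * l * Cf M (mg δ ε q.1) (mg δ q.2 ε')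
        = 4 * l * (((2:ℝ) ^ d * 2 ^ d) * Bf M δ ε ε') := by
      rw [← Finset.mul_sum, key2 M δ ε ε']
    rw [hcard, hsum] at h
    have harg : 4 * l * (((2:ℝ) ^ d * 2 ^ d) * Bf M δ ε ε') / ((2:ℝ) ^ d * 2 ^ d)
        = 4 * l * Bf M δ ε ε' := by
      field_simp
    rw [harg] at h
    refine le_trans h (le_of_eq ?_)
    exact Fintype.sum_prod_type'
      (f := fun a b => Real.exp (4 * l * Cf M (mg δ ε a) (mg δ b ε')))
  -- L4 : unmerging
  have L4 : ∀ δ : Fin d → Bool,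
      ∑ ε : Fin d → Bool, ∑ ε' : Fin d → Bool, ∑ η : Fin d → Bool, ∑ η' : Fin d → Bool,
        Real.exp (4 * l * Cf M (mg δ ε η) (mg δ η' ε'))
      = ((2:ℝ) ^ d * 2 ^ d)
          * ∑ u : Fin d → Bool, ∑ u' : Fin d → Bool, Real.exp (4 * l * Cf M u u') := by
    intro δ
    have inner : ∀ U : Fin d → Bool, ∑ η' : Fin d → Bool, ∑ ε' : Fin d → Bool,
        Real.exp (4 * l * Cf M U (mg δ η' ε'))
        = (2:ℝ) ^ d * ∑ u' : Fin d → Bool, Real.exp (4 * l * Cf M U u') := by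
      intro U
      rw [← Fintype.sum_prod_type']
      exact sum_merge δ (fun v => Real.exp (4 * l * Cf M U v))
    calc ∑ ε : Fin d → Bool, ∑ ε' : Fin d → Bool, ∑ η : Fin d → Bool, ∑ η' : Fin d → Bool,
          Real.exp (4 * l * Cf M (mg δ ε η) (mg δ η' ε'))
        = ∑ ε : Fin d → Bool, ∑ η : Fin d → Bool, ∑ ε' : Fin d → Bool, ∑ η' : Fin d → Bool,
          Real.exp (4 * l * Cf M (mg δ ε η) (mg δ η' ε')) :=
          Finset.sum_congr rfl fun ε _ => Finset.sum_comm
      _ = ∑ ε : Fin d → Bool, ∑ η : Fin d → Bool, ∑ η' : Fin d → Bool, ∑ ε' : Fin d → Bool,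
          Real.exp (4 * l * Cf M (mg δ ε η) (mg δ η' ε')) :=
          Finset.sum_congr rfl fun ε _ => Finset.sum_congr rfl fun η _ => Finset.sum_comm
      _ = ∑ ε : Fin d → Bool, ∑ η : Fin d → Bool,
            (2:ℝ) ^ d * ∑ u' : Fin d → Bool, Real.exp (4 * l * Cf M (mg δ ε η) u') :=
          Finset.sum_congr rfl fun ε _ => Finset.sum_congr rfl fun η _ => inner _
      _ = ((2:ℝ) ^ d * 2 ^ d)
            * ∑ u : Fin d → Bool, ∑ u' : Fin d → Bool, Real.exp (4 * l * Cf M u u') := by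
          rw [← Fintype.sum_prod_type',
            sum_merge δ (fun v => (2:ℝ) ^ d * ∑ u' : Fin d → Bool, Real.exp (4 * l * Cf M v u')),
            ← Finset.mul_sum]
          ring
  -- L5 : conditional Hoeffding
  have L5 : ∀ u : Fin d → Bool, ∑ u' : Fin d → Bool, Real.exp (4 * l * Cf M u u')
      ≤ (2:ℝ) ^ d * Real.exp (8 * l ^ 2 * σ2 * Qv M u) := by
    intro u
    have hC : ∀ u' : Fin d → Bool,
        4 * l * Cf M u u' = ∑ j', (4 * l * (∑ j, Am M j j' * ev u j)) * ev u' j' := by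
      intro u'
      unfold Cf
      rw [Finset.sum_comm, Finset.mul_sum]
      refine Finset.sum_congr rfl fun j' _ => ?_
      calc 4 * l * ∑ j, Am M j j' * (ev u j * ev u' j')
          = ∑ j, (4 * l * (Am M j j' * ev u j)) * ev u' j' := by
            rw [Finset.mul_sum]; exact Finset.sum_congr rfl fun j _ => by ring
        _ = (∑ j, 4 * l * (Am M j j' * ev u j)) * ev u' j' := by rw [Finset.sum_mul]
        _ = (4 * l * ∑ j, Am M j j' * ev u j) * ev u' j' := by rw [Finset.mul_sum]
    calc ∑ u' : Fin d → Bool, Real.exp (4 * l * Cf M u u')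
        = ∑ u' : Fin d → Bool,
            Real.exp (∑ j', (4 * l * (∑ j, Am M j j' * ev u j)) * ev u' j') :=
          Finset.sum_congr rfl fun u' _ => by rw [hC]
      _ ≤ 2 ^ d * Real.exp ((∑ j', (4 * l * (∑ j, Am M j j' * ev u j)) ^ 2) / 2) :=
          sum_exp_linear _
      _ ≤ (2:ℝ) ^ d * Real.exp (8 * l ^ 2 * σ2 * Qv M u) := by
          refine mul_le_mul_of_nonneg_left (Real.exp_le_exp.2 ?_) (le_of_lt hn0)
          have hexp : (∑ j', (4 * l * (∑ j, Am M j j' * ev u j)) ^ 2) / 2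
              = ∑ j', 8 * l ^ 2 * (∑ j, Am M j j' * ev u j) ^ 2 := by
            rw [Finset.sum_div]
            exact Finset.sum_congr rfl fun j' _ => by ring
          rw [hexp, ← Finset.mul_sum]
          calc 8 * l ^ 2 * ∑ j', (∑ j, Am M j j' * ev u j) ^ 2
              ≤ 8 * l ^ 2 * (σ2 * Qv M u) :=
                mul_le_mul_of_nonneg_left (hσ u) (by positivity)
            _ = 8 * l ^ 2 * σ2 * Qv M u := by ring
  -- chain2 : re-coupling identity
  have chain2 : ∀ δ : Fin d → Bool,
      (2:ℝ) ^ d * ∑ u : Fin d → Bool, Real.exp (4 * l * Bf M δ u u)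
      = ∑ ε : Fin d → Bool, ∑ ε' : Fin d → Bool, Real.exp (4 * l * Bf M δ ε ε') := by
    intro δ
    rw [← Fintype.sum_prod_type', ← sum_merge δ (fun v => Real.exp (4 * l * Bf M δ v v))]
    exact Finset.sum_congr rfl fun p _ => by rw [key3]
  have chain1 : ∀ δ : Fin d → Bool,
      ∑ ε : Fin d → Bool, ∑ ε' : Fin d → Bool, Real.exp (4 * l * Bf M δ ε ε')
      ≤ ∑ u : Fin d → Bool, ∑ u' : Fin d → Bool, Real.exp (4 * l * Cf M u u') := by
    intro δ
    have h1 : ((2:ℝ) ^ d * 2 ^ d)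
          * ∑ ε : Fin d → Bool, ∑ ε' : Fin d → Bool, Real.exp (4 * l * Bf M δ ε ε')
        ≤ ∑ ε : Fin d → Bool, ∑ ε' : Fin d → Bool, ∑ η : Fin d → Bool, ∑ η' : Fin d → Bool,
            Real.exp (4 * l * Cf M (mg δ ε η) (mg δ η' ε')) := by
      rw [Finset.mul_sum]
      refine Finset.sum_le_sum fun ε _ => ?_
      rw [Finset.mul_sum]
      exact Finset.sum_le_sum fun ε' _ => L3 δ ε ε'
    rw [L4 δ] at h1
    have hnn : (0:ℝ) < (2:ℝ) ^ d * 2 ^ d := by positivity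
    exact le_of_mul_le_mul_left h1 hnn
  have main : (2:ℝ) ^ d * ∑ u : Fin d → Bool, Real.exp (l * (Qv M u - 1))
      ≤ ∑ u : Fin d → Bool, ∑ u' : Fin d → Bool, Real.exp (4 * l * Cf M u u') := by
    calc (2:ℝ) ^ d * ∑ u : Fin d → Bool, Real.exp (l * (Qv M u - 1))
        = ∑ u : Fin d → Bool, (2:ℝ) ^ d * Real.exp (l * (Qv M u - 1)) := Finset.mul_sum _ _ _
      _ ≤ ∑ u : Fin d → Bool, ∑ δ : Fin d → Bool, Real.exp (4 * l * Bf M δ u u) :=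
          Finset.sum_le_sum fun u _ => L1 u
      _ = ∑ δ : Fin d → Bool, ∑ u : Fin d → Bool, Real.exp (4 * l * Bf M δ u u) :=
          Finset.sum_comm
      _ ≤ ∑ _δ : Fin d → Bool,
            (∑ u : Fin d → Bool, ∑ u' : Fin d → Bool, Real.exp (4 * l * Cf M u u')) / 2 ^ d := by
          refine Finset.sum_le_sum fun δ _ => ?_
          rw [le_div_iff₀ hn0, mul_comm, chain2 δ]
          exact chain1 δ
      _ = ∑ u : Fin d → Bool, ∑ u' : Fin d → Bool, Real.exp (4 * l * Cf M u u') := by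
          rw [Finset.sum_const, card_univ, nsmul_eq_mul]
          simp only [Fintype.card_fun, Fintype.card_bool, Fintype.card_fin, Nat.cast_pow,
            Nat.cast_ofNat]
          field_simp
  have main3 : (2:ℝ) ^ d * ∑ u : Fin d → Bool, Real.exp (l * (Qv M u - 1))
      ≤ (2:ℝ) ^ d * ∑ u : Fin d → Bool, Real.exp (8 * l ^ 2 * σ2 * Qv M u) := by
    refine le_trans main ?_
    rw [Finset.mul_sum]
    exact Finset.sum_le_sum fun u _ => L5 u
  have main4 : ∑ u : Fin d → Bool, Real.exp (l * (Qv M u - 1))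
      ≤ ∑ u : Fin d → Bool, Real.exp (8 * l ^ 2 * σ2 * Qv M u) :=
    le_of_mul_le_mul_left main3 hn0
  refine le_trans main4 (le_of_eq ?_)
  rw [Finset.mul_sum]
  refine Finset.sum_congr rfl fun u _ => ?_
  rw [← Real.exp_add]
  congr 1
  ring


lemma stepB (M : Fin k → Fin d → ℝ) (μ ν : ℝ) (hμ : 0 ≤ μ) (hμν : 2 * μ ≤ ν) :
    (∑ u : Fin d → Bool, Real.exp (μ * (Qv M u - 1))) ^ 2
      ≤ 2 ^ d * (2 ^ d + ∑ u : Fin d → Bool, Real.exp (ν * (Qv M u - 1))) := by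
  have cs := sq_sum_le_card_mul_sum_sq (s := (univ : Finset (Fin d → Bool)))
    (f := fun u => Real.exp (μ * (Qv M u - 1)))
  rw [card_univ] at cs
  have hcard : ((Fintype.card (Fin d → Bool) : ℝ)) = 2 ^ d := card_cube
  have hsq : ∀ u : Fin d → Bool, Real.exp (μ * (Qv M u - 1)) ^ 2
      = Real.exp (2 * μ * (Qv M u - 1)) := by
    intro u
    rw [sq, ← Real.exp_add]
    congr 1; ring
  have hpt : ∀ u : Fin d → Bool, Real.exp (2 * μ * (Qv M u - 1))
      ≤ 1 + Real.exp (ν * (Qv M u - 1)) := by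
    intro u
    rcases le_or_gt 0 (Qv M u - 1) with h | h
    · have : 2 * μ * (Qv M u - 1) ≤ ν * (Qv M u - 1) :=
        mul_le_mul_of_nonneg_right hμν h
      calc Real.exp (2 * μ * (Qv M u - 1)) ≤ Real.exp (ν * (Qv M u - 1)) :=
            Real.exp_le_exp.2 this
        _ ≤ 1 + Real.exp (ν * (Qv M u - 1)) := by linarith
    · have h1 : 2 * μ * (Qv M u - 1) ≤ 0 := by nlinarith
      have h2 : Real.exp (2 * μ * (Qv M u - 1)) ≤ 1 := Real.exp_le_one_iff.2 h1
      have h3 : 0 < Real.exp (ν * (Qv M u - 1)) := Real.exp_pos _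
      linarith
  calc (∑ u : Fin d → Bool, Real.exp (μ * (Qv M u - 1))) ^ 2
      ≤ (Fintype.card (Fin d → Bool) : ℝ)
          * ∑ u : Fin d → Bool, Real.exp (μ * (Qv M u - 1)) ^ 2 := cs
    _ = 2 ^ d * ∑ u : Fin d → Bool, Real.exp (2 * μ * (Qv M u - 1)) := by
        rw [hcard]; congr 1; exact Finset.sum_congr rfl fun u _ => hsq u
    _ ≤ 2 ^ d * (2 ^ d + ∑ u : Fin d → Bool, Real.exp (ν * (Qv M u - 1))) := by
        refine mul_le_mul_of_nonneg_left ?_ (by positivity)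
        calc ∑ u : Fin d → Bool, Real.exp (2 * μ * (Qv M u - 1))
            ≤ ∑ u : Fin d → Bool, (1 + Real.exp (ν * (Qv M u - 1))) :=
              Finset.sum_le_sum fun u _ => hpt u
          _ = 2 ^ d + ∑ u : Fin d → Bool, Real.exp (ν * (Qv M u - 1)) := by
              rw [Finset.sum_add_distrib, Finset.sum_const, card_univ, nsmul_eq_mul, mul_one]
              simp [Fintype.card_fun]
  
set_option maxHeartbeats 2000000 in
/-- Master MGF bound -/
lemma mgf_bound (M : Fin k → Fin d → ℝ) (htr : ∑ j, Am M j j = 1)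
    (σ2 : ℝ) (hσ2 : 0 < σ2)
    (hσ : ∀ u : Fin d → Bool, ∑ j', (∑ j, Am M j j' * ev u j) ^ 2 ≤ σ2 * Qv M u)
    (l : ℝ) (hl : |l| ≤ 1 / (16 * σ2)) :
    ∑ u : Fin d → Bool, Real.exp (l * (Qv M u - 1))
      ≤ 2 ^ d * (2 * Real.exp (16 * l ^ 2 * σ2)) := by
  have hn0 : (0:ℝ) < 2 ^ d := by positivity
  -- first, the case 0 ≤ l
  have pos_case : ∀ m : ℝ, 0 ≤ m → m ≤ 1 / (16 * σ2) →
      ∑ u : Fin d → Bool, Real.exp (m * (Qv M u - 1))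
        ≤ 2 ^ d * (2 * Real.exp (16 * m ^ 2 * σ2)) := by
    intro m hm0 hm1
    set F : ℝ := ∑ u : Fin d → Bool, Real.exp (m * (Qv M u - 1)) with hF
    set K : ℝ := Real.exp (8 * m ^ 2 * σ2) with hK
    have hK1 : 1 ≤ K := by
      rw [hK, ← Real.exp_zero]
      exact Real.exp_le_exp.2 (by positivity)
    have h2μ : 2 * (8 * m ^ 2 * σ2) ≤ m := by
      have : 16 * m * σ2 ≤ 1 := by
        calc 16 * m * σ2 = m * (16 * σ2) := by ring
          _ ≤ (1 / (16 * σ2)) * (16 * σ2) := by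
              refine mul_le_mul_of_nonneg_right hm1 (by positivity)
          _ = 1 := by field_simp
      nlinarith [sq_nonneg m, hσ2.le, hm0]
    have hA := stepA M htr σ2 hσ2.le hσ m
    have hB := stepB M (8 * m ^ 2 * σ2) m (by positivity) h2μ
    -- F ≤ K * G, G^2 ≤ n(n + F)
    set G : ℝ := ∑ u : Fin d → Bool, Real.exp (8 * m ^ 2 * σ2 * (Qv M u - 1)) with hG
    have hFKG : F ≤ K * G := hA
    have hG2 : G ^ 2 ≤ 2 ^ d * (2 ^ d + F) := hB
    have hF0 : 0 < F := by
      rw [hF]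
      exact Finset.sum_pos (fun u _ => Real.exp_pos _) univ_nonempty
    have hG0 : 0 < G := by
      rw [hG]
      exact Finset.sum_pos (fun u _ => Real.exp_pos _) univ_nonempty
    have hK0 : 0 < K := Real.exp_pos _
    have key : F ≤ 2 ^ d * (2 * K ^ 2) := by
      by_contra hc
      push_neg at hc
      have hFn : 2 ^ d * (2 * K ^ 2) < F := hc
      have hKF : 2 ^ d * K ^ 2 < F / 2 := by nlinarith
      have h1 : F ^ 2 ≤ K ^ 2 * (2 ^ d * (2 ^ d + F)) := by
        calc F ^ 2 ≤ (K * G) ^ 2 := by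
              refine pow_le_pow_left₀ hF0.le hFKG 2
          _ = K ^ 2 * G ^ 2 := by ring
          _ ≤ K ^ 2 * (2 ^ d * (2 ^ d + F)) := by
              refine mul_le_mul_of_nonneg_left hG2 (by positivity)
      have hK2 : (1:ℝ) ≤ K ^ 2 := by nlinarith [hK1]
      have hnF : (2:ℝ) ^ d < F := by
        have t : (2:ℝ) ^ d ≤ 2 ^ d * K ^ 2 :=
          le_mul_of_one_le_right hn0.le hK2
        nlinarith [t, hFn]
      have e1 : K ^ 2 * ((2:ℝ) ^ d * (2 ^ d + F)) = (2 ^ d * K ^ 2) * 2 ^ d + (2 ^ d * K ^ 2) * F := by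
        ring
      rw [e1] at h1
      have e2 : ((2:ℝ) ^ d * K ^ 2) * 2 ^ d < (F / 2) * F := by
        have t1 := mul_lt_mul_of_pos_right hKF hn0
        have t2 : (F / 2) * 2 ^ d < (F / 2) * F := mul_lt_mul_of_pos_left hnF (by linarith)
        linarith
      have e3 : ((2:ℝ) ^ d * K ^ 2) * F < (F / 2) * F := mul_lt_mul_of_pos_right hKF hF0
      nlinarith [e2, e3, h1]
    have hKK : K ^ 2 = Real.exp (16 * m ^ 2 * σ2) := by
      conv_lhs => rw [pow_two]
      rw [hK, ← Real.exp_add]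
      congr 1; ring
    calc F ≤ 2 ^ d * (2 * K ^ 2) := key
      _ = 2 ^ d * (2 * Real.exp (16 * m ^ 2 * σ2)) := by rw [hKK]
  rcases le_or_gt 0 l with hl0 | hl0
  · exact pos_case l hl0 (by rwa [abs_of_nonneg hl0] at hl)
  · -- negative case
    have hml : 0 ≤ -l := by linarith
    have hml1 : -l ≤ 1 / (16 * σ2) := by rwa [abs_of_neg hl0] at hl
    have hA := stepA M htr σ2 hσ2.le hσ l
    have h2μ : 2 * (8 * l ^ 2 * σ2) ≤ -l := by
      have : 16 * (-l) * σ2 ≤ 1 := by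
        calc 16 * (-l) * σ2 = (-l) * (16 * σ2) := by ring
          _ ≤ (1 / (16 * σ2)) * (16 * σ2) :=
              mul_le_mul_of_nonneg_right hml1 (by positivity)
          _ = 1 := by field_simp
      nlinarith [sq_nonneg l, hσ2.le]
    have hB := stepB M (8 * l ^ 2 * σ2) (-l) (by positivity) h2μ
    have hneg := pos_case (-l) hml hml1
    obtain ⟨F, hF⟩ : ∃ F, F = ∑ u : Fin d → Bool, Real.exp (l * (Qv M u - 1)) := ⟨_, rfl⟩
    obtain ⟨G, hG⟩ : ∃ G, G = ∑ u : Fin d → Bool,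
        Real.exp (8 * l ^ 2 * σ2 * (Qv M u - 1)) := ⟨_, rfl⟩
    obtain ⟨H, hH⟩ : ∃ H, H = ∑ u : Fin d → Bool, Real.exp (-l * (Qv M u - 1)) := ⟨_, rfl⟩
    obtain ⟨K, hK⟩ : ∃ K, K = Real.exp (8 * l ^ 2 * σ2) := ⟨_, rfl⟩
    rw [← hF, ← hG, ← hK] at hA
    rw [← hG, ← hH] at hB
    rw [← hH] at hneg
    rw [← hF]
    have hK1 : 1 ≤ K := by
      rw [hK, ← Real.exp_zero]
      exact Real.exp_le_exp.2 (by positivity)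
    have hK0 : 0 < K := by rw [hK]; exact Real.exp_pos _
    have hG0 : 0 < G := by
      rw [hG]; exact Finset.sum_pos (fun u _ => Real.exp_pos _) univ_nonempty
    have hKneg : Real.exp (16 * (-l) ^ 2 * σ2) = K ^ 2 := by
      rw [hK]
      conv_rhs => rw [pow_two]
      rw [← Real.exp_add]
      congr 1; ring
    rw [hKneg] at hneg
    have hG2' : G ^ 2 ≤ (2 * 2 ^ d * K) ^ 2 := by
      have h1 : (2:ℝ) ^ d + H ≤ 2 ^ d + 2 ^ d * (2 * K ^ 2) := by linarith [hneg]
      have h2 : G ^ 2 ≤ 2 ^ d * (2 ^ d + 2 ^ d * (2 * K ^ 2)) := by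
        refine le_trans hB (mul_le_mul_of_nonneg_left h1 (by positivity))
      have hKK2 : (0:ℝ) ≤ 2 * K ^ 2 - 1 := by nlinarith [hK1]
      have hnn : (0:ℝ) ≤ (2:ℝ) ^ d * 2 ^ d := by positivity
      have h3 : (2:ℝ) ^ d * (2 ^ d + 2 ^ d * (2 * K ^ 2)) ≤ (2 * 2 ^ d * K) ^ 2 := by
        nlinarith [mul_nonneg hKK2 hnn]
      exact le_trans h2 h3
    have hGle : G ≤ 2 * 2 ^ d * K := by
      have h2nK : (0:ℝ) < 2 * 2 ^ d * K := by positivity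
      nlinarith [hG2', hG0, h2nK]
    have hKK : K ^ 2 = Real.exp (16 * l ^ 2 * σ2) := by
      rw [hK]
      conv_lhs => rw [pow_two]
      rw [← Real.exp_add]
      congr 1; ring
    calc F ≤ K * G := hA
      _ ≤ K * (2 * 2 ^ d * K) := mul_le_mul_of_nonneg_left hGle hK0.le
      _ = 2 ^ d * (2 * K ^ 2) := by ring
      _ = 2 ^ d * (2 * Real.exp (16 * l ^ 2 * σ2)) := by rw [hKK]

/-- Chernoff counting bound -/
lemma chernoff {ι : Type*} [Fintype ι] (f : ι → ℝ) (u lam : ℝ) (hlam : 0 ≤ lam) :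
    ((univ.filter fun i => u < f i).card : ℝ)
      ≤ Real.exp (-(lam * u)) * ∑ i, Real.exp (lam * f i) := by
  have h1 : ((univ.filter fun i => u < f i).card : ℝ)
      = ∑ i ∈ univ.filter fun i => u < f i, (1:ℝ) := by simp
  rw [h1]
  have h2 : ∀ i ∈ univ.filter fun i => u < f i, (1:ℝ) ≤ Real.exp (lam * (f i - u)) := by
    intro i hi
    rw [Finset.mem_filter] at hi
    rw [← Real.exp_zero]
    refine Real.exp_le_exp.2 ?_
    have := hi.2
    nlinarith
  calc ∑ i ∈ univ.filter fun i => u < f i, (1:ℝ)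
      ≤ ∑ i ∈ univ.filter fun i => u < f i, Real.exp (lam * (f i - u)) :=
        Finset.sum_le_sum h2
    _ ≤ ∑ i, Real.exp (lam * (f i - u)) :=
        Finset.sum_le_sum_of_subset_of_nonneg (Finset.filter_subset _ _)
          (fun i _ _ => (Real.exp_pos _).le)
    _ = Real.exp (-(lam * u)) * ∑ i, Real.exp (lam * f i) := by
        rw [Finset.mul_sum]
        refine Finset.sum_congr rfl fun i _ => ?_
        rw [← Real.exp_add]
        congr 1; ring


set_option maxHeartbeats 2000000 in
/-- Master tail bound -/
lemma tail_bound (M : Fin k → Fin d → ℝ) (htr : ∑ j, Am M j j = 1)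
    (σ2 : ℝ) (hσ2 : 0 < σ2)
    (hσ : ∀ u : Fin d → Bool, ∑ j', (∑ j, Am M j j' * ev u j) ^ 2 ≤ σ2 * Qv M u)
    (t : ℝ) (ht : 0 ≤ t) :
    ((univ.filter fun ε : Fin d → Bool => t < |Real.sqrt (Qv M ε) - 1|).card : ℝ)
      ≤ 2 ^ d * (4 * Real.exp (-t ^ 2 / (64 * σ2))) := by
  have hn0 : (0:ℝ) < 2 ^ d := by positivity
  set u₁ : ℝ := if t ≤ 2 then t else t ^ 2 with hu₁
  -- event inclusion
  have hincl : ∀ ε : Fin d → Bool, t < |Real.sqrt (Qv M ε) - 1| →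
      (u₁ < Qv M ε - 1) ∨ (t < -(Qv M ε - 1)) := by
    intro ε hε
    have hQ0 : 0 ≤ Qv M ε := Finset.sum_nonneg fun i _ => sq_nonneg _
    have hsq : Real.sqrt (Qv M ε) ^ 2 = Qv M ε := Real.sq_sqrt hQ0
    have hs0 : 0 ≤ Real.sqrt (Qv M ε) := Real.sqrt_nonneg _
    rcases lt_abs.1 hε with h | h
    · left
      have h1 : 1 + t < Real.sqrt (Qv M ε) := by linarith
      have h2 : (1 + t) ^ 2 < Qv M ε := by
        rw [← hsq]
        nlinarith [h1, hs0, ht]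
      have hu : u₁ ≤ 2 * t + t ^ 2 := by
        rw [hu₁]; split_ifs with hcase <;> nlinarith [ht]
      nlinarith [h2, hu]
    · right
      have h1 : Real.sqrt (Qv M ε) < 1 - t := by linarith
      have ht1 : t < 1 := by nlinarith [hs0, h1]
      have h2 : Qv M ε < (1 - t) ^ 2 := by
        rw [← hsq]
        nlinarith [hs0, h1, ht1]
      nlinarith [h2, ht, ht1]
  have hsub : (univ.filter fun ε : Fin d → Bool => t < |Real.sqrt (Qv M ε) - 1|)
      ⊆ (univ.filter fun ε : Fin d → Bool => u₁ < Qv M ε - 1)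
        ∪ (univ.filter fun ε : Fin d → Bool => t < -(Qv M ε - 1)) := by
    intro ε hε
    rw [Finset.mem_filter] at hε
    rcases hincl ε hε.2 with h | h
    · exact Finset.mem_union_left _ (Finset.mem_filter.2 ⟨Finset.mem_univ _, h⟩)
    · exact Finset.mem_union_right _ (Finset.mem_filter.2 ⟨Finset.mem_univ _, h⟩)
  have hcard : ((univ.filter fun ε : Fin d → Bool => t < |Real.sqrt (Qv M ε) - 1|).card : ℝ)
      ≤ ((univ.filter fun ε : Fin d → Bool => u₁ < Qv M ε - 1).card : ℝ)
        + ((univ.filter fun ε : Fin d → Bool => t < -(Qv M ε - 1)).card : ℝ) := by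
    have h1 := Finset.card_le_card hsub
    have h2 := Finset.card_union_le
      (univ.filter fun ε : Fin d → Bool => u₁ < Qv M ε - 1)
      (univ.filter fun ε : Fin d → Bool => t < -(Qv M ε - 1))
    exact_mod_cast le_trans h1 h2
  -- bound on E₁
  have hE1 : ((univ.filter fun ε : Fin d → Bool => u₁ < Qv M ε - 1).card : ℝ)
      ≤ 2 ^ d * (2 * Real.exp (-t ^ 2 / (64 * σ2))) := by
    rcases le_or_gt t 2 with hc | hc
    · set lam : ℝ := t / (32 * σ2) with hlam
      have hlam0 : 0 ≤ lam := by rw [hlam]; positivity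
      have hlamb : |lam| ≤ 1 / (16 * σ2) := by
        rw [abs_of_nonneg hlam0, hlam, div_le_div_iff₀ (by positivity) (by positivity)]
        nlinarith [hσ2, hc]
      have hch := chernoff (fun ε : Fin d → Bool => Qv M ε - 1) u₁ lam hlam0
      have hmgf := mgf_bound M htr σ2 hσ2 hσ lam hlamb
      have hu1t : u₁ = t := by rw [hu₁, if_pos hc]
      calc ((univ.filter fun ε : Fin d → Bool => u₁ < Qv M ε - 1).card : ℝ)
          ≤ Real.exp (-(lam * u₁)) * ∑ ε : Fin d → Bool, Real.exp (lam * (Qv M ε - 1)) := hch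
        _ ≤ Real.exp (-(lam * u₁)) * (2 ^ d * (2 * Real.exp (16 * lam ^ 2 * σ2))) :=
            mul_le_mul_of_nonneg_left hmgf (Real.exp_pos _).le
        _ = 2 ^ d * (2 * Real.exp (16 * lam ^ 2 * σ2 - lam * u₁)) := by
            rw [Real.exp_sub, Real.exp_neg]
            field_simp
        _ ≤ 2 ^ d * (2 * Real.exp (-t ^ 2 / (64 * σ2))) := by
            refine mul_le_mul_of_nonneg_left (mul_le_mul_of_nonneg_left
              (Real.exp_le_exp.2 ?_) (by norm_num)) hn0.le
            rw [hu1t, hlam]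
            have e : 16 * (t / (32 * σ2)) ^ 2 * σ2 - t / (32 * σ2) * t
                = -t ^ 2 / (64 * σ2) := by
              field_simp
              ring
            exact le_of_eq e
    · set lam : ℝ := 1 / (16 * σ2) with hlam
      have hlam0 : 0 ≤ lam := by rw [hlam]; positivity
      have hlamb : |lam| ≤ 1 / (16 * σ2) := by
        rw [abs_of_nonneg hlam0]
      have hch := chernoff (fun ε : Fin d → Bool => Qv M ε - 1) u₁ lam hlam0
      have hmgf := mgf_bound M htr σ2 hσ2 hσ lam hlamb
      have hu1t : u₁ = t ^ 2 := by rw [hu₁, if_neg (not_le.2 hc)]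
      calc ((univ.filter fun ε : Fin d → Bool => u₁ < Qv M ε - 1).card : ℝ)
          ≤ Real.exp (-(lam * u₁)) * ∑ ε : Fin d → Bool, Real.exp (lam * (Qv M ε - 1)) := hch
        _ ≤ Real.exp (-(lam * u₁)) * (2 ^ d * (2 * Real.exp (16 * lam ^ 2 * σ2))) :=
            mul_le_mul_of_nonneg_left hmgf (Real.exp_pos _).le
        _ = 2 ^ d * (2 * Real.exp (16 * lam ^ 2 * σ2 - lam * u₁)) := by
            rw [Real.exp_sub, Real.exp_neg]
            field_simp
        _ ≤ 2 ^ d * (2 * Real.exp (-t ^ 2 / (64 * σ2))) := by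
            refine mul_le_mul_of_nonneg_left (mul_le_mul_of_nonneg_left
              (Real.exp_le_exp.2 ?_) (by norm_num)) hn0.le
            rw [hu1t, hlam]
            have e : 16 * (1 / (16 * σ2)) ^ 2 * σ2 - 1 / (16 * σ2) * t ^ 2
                = (1 - t ^ 2) / (16 * σ2) := by
              field_simp
            rw [e, div_le_div_iff₀ (by positivity) (by positivity)]
            nlinarith [mul_nonneg hσ2.le (by nlinarith [hc] : (0:ℝ) ≤ 3 * t ^ 2 - 4)]
  -- bound on E₂
  have hE2 : ((univ.filter fun ε : Fin d → Bool => t < -(Qv M ε - 1)).card : ℝ)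
      ≤ 2 ^ d * (2 * Real.exp (-t ^ 2 / (64 * σ2))) := by
    rcases le_or_gt t 2 with hc | hc
    · set lam : ℝ := t / (32 * σ2) with hlam
      have hlam0 : 0 ≤ lam := by rw [hlam]; positivity
      have hlamb : |(-lam)| ≤ 1 / (16 * σ2) := by
        rw [abs_neg, abs_of_nonneg hlam0, hlam, div_le_div_iff₀ (by positivity) (by positivity)]
        nlinarith [hσ2, hc]
      have hch := chernoff (fun ε : Fin d → Bool => -(Qv M ε - 1)) t lam hlam0
      have hmgf := mgf_bound M htr σ2 hσ2 hσ (-lam) hlamb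
      have heq : ∀ ε : Fin d → Bool, Real.exp (lam * -(Qv M ε - 1))
          = Real.exp ((-lam) * (Qv M ε - 1)) := by
        intro ε; congr 1; ring
      rw [Finset.sum_congr rfl fun ε _ => heq ε] at hch
      calc ((univ.filter fun ε : Fin d → Bool => t < -(Qv M ε - 1)).card : ℝ)
          ≤ Real.exp (-(lam * t)) * ∑ ε : Fin d → Bool, Real.exp ((-lam) * (Qv M ε - 1)) := hch
        _ ≤ Real.exp (-(lam * t)) * (2 ^ d * (2 * Real.exp (16 * (-lam) ^ 2 * σ2))) :=
            mul_le_mul_of_nonneg_left hmgf (Real.exp_pos _).le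
        _ = 2 ^ d * (2 * Real.exp (16 * lam ^ 2 * σ2 - lam * t)) := by
            rw [Real.exp_sub, Real.exp_neg]
            have : (16 * (-lam) ^ 2 * σ2) = 16 * lam ^ 2 * σ2 := by ring
            rw [this]
            field_simp
        _ ≤ 2 ^ d * (2 * Real.exp (-t ^ 2 / (64 * σ2))) := by
            refine mul_le_mul_of_nonneg_left (mul_le_mul_of_nonneg_left
              (Real.exp_le_exp.2 ?_) (by norm_num)) hn0.le
            rw [hlam]
            have e : 16 * (t / (32 * σ2)) ^ 2 * σ2 - t / (32 * σ2) * t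
                = -t ^ 2 / (64 * σ2) := by
              field_simp
              ring
            exact le_of_eq e
    · have hempty : (univ.filter fun ε : Fin d → Bool => t < -(Qv M ε - 1)) = ∅ := by
        refine Finset.filter_false_of_mem fun ε _ => ?_
        have hQ0 : 0 ≤ Qv M ε := Finset.sum_nonneg fun i _ => sq_nonneg _
        push_neg
        nlinarith [hQ0, hc]
      rw [hempty]
      simp only [Finset.card_empty, Nat.cast_zero]
      positivity
  calc ((univ.filter fun ε : Fin d → Bool => t < |Real.sqrt (Qv M ε) - 1|).card : ℝ)
      ≤ ((univ.filter fun ε : Fin d → Bool => u₁ < Qv M ε - 1).card : ℝ)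
        + ((univ.filter fun ε : Fin d → Bool => t < -(Qv M ε - 1)).card : ℝ) := hcard
    _ ≤ 2 ^ d * (2 * Real.exp (-t ^ 2 / (64 * σ2)))
        + 2 ^ d * (2 * Real.exp (-t ^ 2 / (64 * σ2))) := add_le_add hE1 hE2
    _ = 2 ^ d * (4 * Real.exp (-t ^ 2 / (64 * σ2))) := by ring

end BDXaux

namespace BDXfinal
open BDXaux

variable {k d : ℕ}

lemma norm24_bddAbove (B : Matrix (Fin k) (Fin d) ℝ) (hB : ∀ j, ∑ i, B i j ^ 2 = 1) :
    BddAbove {r : ℝ | ∃ y : Fin k → ℝ, ∑ i, y i ^ 2 = 1 ∧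
      r = (∑ j, (∑ i, B i j * y i) ^ 4) ^ ((1 : ℝ) / 4)} := by
  refine ⟨(d : ℝ) ^ ((1:ℝ)/4), ?_⟩
  rintro r ⟨y, hy, rfl⟩
  have hterm : ∀ j : Fin d, (∑ i, B i j * y i) ^ 4 ≤ 1 := by
    intro j
    have hcs := Finset.sum_mul_sq_le_sq_mul_sq univ (fun i => B i j) y
    rw [hB j, hy, one_mul] at hcs
    nlinarith [hcs, sq_nonneg (∑ i, B i j * y i)]
  have hsum : ∑ j, (∑ i, B i j * y i) ^ 4 ≤ (d : ℝ) := by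
    calc ∑ j, (∑ i, B i j * y i) ^ 4 ≤ ∑ _j : Fin d, (1:ℝ) :=
          Finset.sum_le_sum fun j _ => hterm j
      _ = (d : ℝ) := by simp
  have h0 : 0 ≤ ∑ j, (∑ i, B i j * y i) ^ 4 :=
    Finset.sum_nonneg fun j _ => by positivity
  exact Real.rpow_le_rpow h0 hsum (by norm_num)

lemma norm24_ge (B : Matrix (Fin k) (Fin d) ℝ) (hB : ∀ j, ∑ i, B i j ^ 2 = 1)
    (y : Fin k → ℝ) (hy : ∑ i, y i ^ 2 = 1) :
    (∑ j, (∑ i, B i j * y i) ^ 4) ^ ((1:ℝ)/4) ≤ norm24 B :=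
  le_csSup (norm24_bddAbove B hB) ⟨y, hy, rfl⟩

lemma norm24_pow4 (B : Matrix (Fin k) (Fin d) ℝ) (hB : ∀ j, ∑ i, B i j ^ 2 = 1)
    (hN0 : 0 ≤ norm24 B)
    (y : Fin k → ℝ) (hy : ∑ i, y i ^ 2 = 1) :
    ∑ j, (∑ i, B i j * y i) ^ 4 ≤ (norm24 B) ^ 4 := by
  have h0 : 0 ≤ ∑ j, (∑ i, B i j * y i) ^ 4 :=
    Finset.sum_nonneg fun j _ => by positivity
  have hr := norm24_ge B hB y hy
  have hr0 : 0 ≤ (∑ j, (∑ i, B i j * y i) ^ 4) ^ ((1:ℝ)/4) := Real.rpow_nonneg h0 _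
  have hpow := pow_le_pow_left₀ hr0 hr 4
  calc ∑ j, (∑ i, B i j * y i) ^ 4
      = (((∑ j, (∑ i, B i j * y i) ^ 4) ^ ((1:ℝ)/4)) ^ (4:ℕ)) := by
        rw [← Real.rpow_natCast ((∑ j, (∑ i, B i j * y i) ^ 4) ^ ((1:ℝ)/4)) 4,
          ← Real.rpow_mul h0]
        norm_num
    _ ≤ (norm24 B) ^ 4 := hpow

lemma norm24_one_le (B : Matrix (Fin k) (Fin d) ℝ) (hB : ∀ j, ∑ i, B i j ^ 2 = 1)
    (j₀ : Fin d) : 1 ≤ norm24 B := by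
  have hy : ∑ i, (B i j₀) ^ 2 = 1 := hB j₀
  have hbase : (1:ℝ) ≤ ∑ j, (∑ i, B i j * B i j₀) ^ 4 := by
    have hj₀ : (1:ℝ) ≤ (∑ i, B i j₀ * B i j₀) ^ 4 := by
      have : ∑ i, B i j₀ * B i j₀ = 1 := by
        rw [← hy]; exact Finset.sum_congr rfl fun i _ => (sq (B i j₀)).symm
      rw [this]; norm_num
    calc (1:ℝ) ≤ (∑ i, B i j₀ * B i j₀) ^ 4 := hj₀
      _ ≤ ∑ j, (∑ i, B i j * B i j₀) ^ 4 :=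
          Finset.single_le_sum (f := fun j => (∑ i, B i j * B i j₀) ^ 4)
            (fun j _ => by positivity) (Finset.mem_univ j₀)
  have h1 : (1:ℝ) ≤ (∑ j, (∑ i, B i j * B i j₀) ^ 4) ^ ((1:ℝ)/4) := by
    have := Real.rpow_le_rpow (by norm_num : (0:ℝ) ≤ 1) hbase (by norm_num : (0:ℝ) ≤ 1/4)
    rwa [Real.one_rpow] at this
  exact le_trans h1 (norm24_ge B hB _ hy)

end BDXfinal

namespace BDXfinal

set_option maxHeartbeats 1000000 in
lemma sigma_bound {k d : ℕ} (B : Matrix (Fin k) (Fin d) ℝ) (hB : ∀ j, ∑ i, B i j ^ 2 = 1)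
    (x : Fin d → ℝ) (j₀ : Fin d) (v : Fin k → ℝ) :
    ∑ j, (∑ i, (B i j * x j) * v i) ^ 2
      ≤ (Real.sqrt (∑ j, x j ^ 4) * (norm24 B) ^ 2) * ∑ i, v i ^ 2 := by
  have hN0 : (0:ℝ) ≤ norm24 B := le_trans zero_le_one (norm24_one_le B hB j₀)
  set c : Fin d → ℝ := fun j => ∑ i, B i j * v i with hc
  have step0 : ∀ j, ∑ i, (B i j * x j) * v i = x j * c j := by
    intro j
    rw [hc, Finset.mul_sum]
    exact Finset.sum_congr rfl fun i _ => by ring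
  have step1 : ∑ j, (∑ i, (B i j * x j) * v i) ^ 2 = ∑ j, x j ^ 2 * c j ^ 2 := by
    refine Finset.sum_congr rfl fun j _ => ?_
    rw [step0 j]; ring
  rw [step1]
  have hx40 : (0:ℝ) ≤ ∑ j, x j ^ 4 := Finset.sum_nonneg fun j _ => by positivity
  have hc40 : (0:ℝ) ≤ ∑ j, c j ^ 4 := Finset.sum_nonneg fun j _ => by positivity
  have hcs : (∑ j, x j ^ 2 * c j ^ 2) ^ 2 ≤ (∑ j, x j ^ 4) * (∑ j, c j ^ 4) := by
    have h := Finset.sum_mul_sq_le_sq_mul_sq univ (fun j => x j ^ 2) (fun j => c j ^ 2)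
    have e1 : ∑ j, (x j ^ 2) ^ 2 = ∑ j, x j ^ 4 :=
      Finset.sum_congr rfl fun j _ => by ring
    have e2 : ∑ j, (c j ^ 2) ^ 2 = ∑ j, c j ^ 4 :=
      Finset.sum_congr rfl fun j _ => by ring
    rwa [e1, e2] at h
  have hL0 : (0:ℝ) ≤ ∑ j, x j ^ 2 * c j ^ 2 :=
    Finset.sum_nonneg fun j _ => by positivity
  have hstep2 : ∑ j, x j ^ 2 * c j ^ 2
      ≤ Real.sqrt (∑ j, x j ^ 4) * Real.sqrt (∑ j, c j ^ 4) := by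
    calc ∑ j, x j ^ 2 * c j ^ 2
        = Real.sqrt ((∑ j, x j ^ 2 * c j ^ 2) ^ 2) := (Real.sqrt_sq hL0).symm
      _ ≤ Real.sqrt ((∑ j, x j ^ 4) * (∑ j, c j ^ 4)) := Real.sqrt_le_sqrt hcs
      _ = Real.sqrt (∑ j, x j ^ 4) * Real.sqrt (∑ j, c j ^ 4) := Real.sqrt_mul hx40 _
  have hstep3 : Real.sqrt (∑ j, c j ^ 4) ≤ (norm24 B) ^ 2 * ∑ i, v i ^ 2 := by
    by_cases hv : ∑ i, v i ^ 2 = 0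
    · have hvz : ∀ i, v i = 0 := by
        intro i
        have h := (Finset.sum_eq_zero_iff_of_nonneg
          (fun i _ => sq_nonneg (v i))).1 hv i (Finset.mem_univ i)
        exact pow_eq_zero_iff two_ne_zero |>.1 h
      have hcz : ∀ j, c j = 0 := fun j =>
        Finset.sum_eq_zero fun i _ => by rw [hvz i, mul_zero]
      have : ∑ j, c j ^ 4 = 0 := Finset.sum_eq_zero fun j _ => by rw [hcz j]; norm_num
      rw [this, Real.sqrt_zero, hv, mul_zero]
    · have hρ : 0 < ∑ i, v i ^ 2 :=
        lt_of_le_of_ne (Finset.sum_nonneg fun i _ => sq_nonneg _) (Ne.symm hv)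
      set ρ : ℝ := ∑ i, v i ^ 2 with hρdef
      have hsρ : 0 < Real.sqrt ρ := Real.sqrt_pos.2 hρ
      set y : Fin k → ℝ := fun i => v i / Real.sqrt ρ with hy
      have hy1 : ∑ i, y i ^ 2 = 1 := by
        have : ∀ i, y i ^ 2 = v i ^ 2 / ρ := by
          intro i
          rw [hy]
          rw [div_pow, Real.sq_sqrt hρ.le]
        rw [Finset.sum_congr rfl fun i _ => this i, ← Finset.sum_div]
        rw [← hρdef]
        field_simp
      have hKN := norm24_pow4 B hB hN0 y hy1
      have hcy : ∀ j, ∑ i, B i j * y i = c j / Real.sqrt ρ := by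
        intro j
        rw [hc, hy, Finset.sum_div]
        exact Finset.sum_congr rfl fun i _ => by rw [mul_div_assoc]
      have hpow : ∀ j, (c j / Real.sqrt ρ) ^ 4 = c j ^ 4 / ρ ^ 2 := by
        intro j
        rw [div_pow]
        congr 1
        rw [show (4:ℕ) = 2 * 2 from rfl, pow_mul, Real.sq_sqrt hρ.le]
      rw [Finset.sum_congr rfl fun j _ => by rw [hcy j, hpow j], ← Finset.sum_div] at hKN
      have hc4 : ∑ j, c j ^ 4 ≤ (norm24 B) ^ 4 * ρ ^ 2 := by
        rw [div_le_iff₀ (by positivity)] at hKN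
        linarith [hKN]
      calc Real.sqrt (∑ j, c j ^ 4)
          ≤ Real.sqrt ((norm24 B) ^ 4 * ρ ^ 2) := Real.sqrt_le_sqrt hc4
        _ = (norm24 B) ^ 2 * ρ := by
            rw [show (norm24 B) ^ 4 * ρ ^ 2 = ((norm24 B) ^ 2 * ρ) ^ 2 from by ring]
            exact Real.sqrt_sq (by positivity)
  calc ∑ j, x j ^ 2 * c j ^ 2
      ≤ Real.sqrt (∑ j, x j ^ 4) * Real.sqrt (∑ j, c j ^ 4) := hstep2
    _ ≤ Real.sqrt (∑ j, x j ^ 4) * ((norm24 B) ^ 2 * ∑ i, v i ^ 2) :=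
        mul_le_mul_of_nonneg_left hstep3 (Real.sqrt_nonneg _)
    _ = (Real.sqrt (∑ j, x j ^ 4) * (norm24 B) ^ 2) * ∑ i, v i ^ 2 := by ring

end BDXfinal


set_option maxHeartbeats 1000000 in
/-- Corollary 5.1 from Ailon–Liberty: for a `k × d` matrix `B` with
unit-norm columns and a random `±1` diagonal matrix `D`, for any unit vector `x` and
`t ≥ 0`, `P(|‖B D x‖₂ − 1| > t) ≤ c₅ exp(−c₆ t² / (‖x‖₄² ‖Bᵀ‖²_{2→4}))`. -/
theorem bdx_concentration :
    ∃ c₅ > (0 : ℝ), ∃ c₆ > (0 : ℝ), ∀ (k d : ℕ) (B : Matrix (Fin k) (Fin d) ℝ),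
      (∀ j, ∑ i, B i j ^ 2 = 1) →
      ∀ x : Fin d → ℝ, ∑ j, x j ^ 2 = 1 → ∀ t : ℝ, 0 ≤ t →
      ((Finset.univ.filter fun ε : Fin d → Bool =>
          t < |Real.sqrt (∑ i, (B.mulVec fun j => sgn (ε j) * x j) i ^ 2) - 1|).card : ℝ)
          / 2 ^ d
        ≤ c₅ * Real.exp (-(c₆ * t ^ 2) /
            (Real.sqrt (∑ j, x j ^ 4) * (norm24 B) ^ 2)) := by
  refine ⟨4, by norm_num, 1/64, by norm_num, ?_⟩
  intro k d B hB x hx t ht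
  classical
  have hex : ∃ j₀ : Fin d, x j₀ ≠ 0 := by
    by_contra h
    push_neg at h
    rw [Finset.sum_congr rfl (fun j _ => by rw [h j]; norm_num : ∀ j ∈ univ, x j ^ 2 = 0)] at hx
    simp at hx
  obtain ⟨j₀, hj₀⟩ := hex
  have hx4pos : 0 < ∑ j, x j ^ 4 := by
    have hterm : 0 < x j₀ ^ 4 := by
      have h1 : x j₀ ^ 4 = (x j₀ ^ 2) ^ 2 := by ring
      rw [h1]
      exact lt_of_le_of_ne (by positivity)
        (Ne.symm (pow_ne_zero _ (pow_ne_zero _ hj₀)))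
    exact Finset.sum_pos' (fun j _ => by positivity) ⟨j₀, Finset.mem_univ _, hterm⟩
  have hs0 : 0 < Real.sqrt (∑ j, x j ^ 4) := Real.sqrt_pos.2 hx4pos
  have hN1 : 1 ≤ norm24 B := BDXfinal.norm24_one_le B hB j₀
  have hσ2pos : 0 < Real.sqrt (∑ j, x j ^ 4) * (norm24 B) ^ 2 :=
    mul_pos hs0 (by nlinarith [hN1])
  have htr : ∑ j, BDXaux.Am (fun i j => B i j * x j) j j = 1 := by
    have hAm : ∀ j : Fin d, BDXaux.Am (fun i j => B i j * x j) j j = x j ^ 2 := by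
      intro j
      unfold BDXaux.Am
      calc ∑ i, (B i j * x j) * (B i j * x j)
          = ∑ i, x j ^ 2 * B i j ^ 2 := Finset.sum_congr rfl fun i _ => by ring
        _ = x j ^ 2 * ∑ i, B i j ^ 2 := by rw [Finset.mul_sum]
        _ = x j ^ 2 := by rw [hB j, mul_one]
    rw [Finset.sum_congr rfl fun j _ => hAm j, hx]
  have hσ : ∀ u : Fin d → Bool,
      ∑ j', (∑ j, BDXaux.Am (fun i j => B i j * x j) j j' * BDXaux.ev u j) ^ 2
        ≤ (Real.sqrt (∑ j, x j ^ 4) * (norm24 B) ^ 2)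
            * BDXaux.Qv (fun i j => B i j * x j) u := by
    intro u
    have hrw : ∀ j' : Fin d,
        ∑ j, BDXaux.Am (fun i j => B i j * x j) j j' * BDXaux.ev u j
        = ∑ i, (B i j' * x j')
            * (∑ j, (B i j * x j) * BDXaux.ev u j) :=
      fun j' => BDXaux.sum_Am_ev (fun i j => B i j * x j) u j'
    rw [Finset.sum_congr rfl fun j' _ => by rw [hrw j']]
    exact BDXfinal.sigma_bound B hB x j₀
      (fun i => ∑ j, (B i j * x j) * BDXaux.ev u j)
  have hT := BDXaux.tail_bound (fun i j => B i j * x j) htr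
    (Real.sqrt (∑ j, x j ^ 4) * (norm24 B) ^ 2) hσ2pos hσ t ht
  have hQ : ∀ ε : Fin d → Bool,
      ∑ i, (B.mulVec fun j => sgn (ε j) * x j) i ^ 2
        = BDXaux.Qv (fun i j => B i j * x j) ε := by
    intro ε
    unfold BDXaux.Qv
    refine Finset.sum_congr rfl fun i _ => ?_
    congr 1
    simp only [Matrix.mulVec, dotProduct]
    exact Finset.sum_congr rfl fun j _ => by simp only [BDXaux.ev]; ring
  have hgoal_rw : (Finset.univ.filter fun ε : Fin d → Bool =>
        t < |Real.sqrt (∑ i, (B.mulVec fun j => sgn (ε j) * x j) i ^ 2) - 1|)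
      = (Finset.univ.filter fun ε : Fin d → Bool =>
        t < |Real.sqrt (BDXaux.Qv (fun i j => B i j * x j) ε) - 1|) := by
    refine Finset.filter_congr fun ε _ => ?_
    rw [hQ ε]
  rw [hgoal_rw]
  have hn0 : (0:ℝ) < 2 ^ d := by positivity
  rw [div_le_iff₀ hn0]
  have hexp : -(1 / 64 * t ^ 2) / (Real.sqrt (∑ j, x j ^ 4) * norm24 B ^ 2)
      = -t ^ 2 / (64 * (Real.sqrt (∑ j, x j ^ 4) * (norm24 B) ^ 2)) := by
    rw [div_eq_div_iff (ne_of_gt hσ2pos) (by positivity)]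
    ring
  rw [hexp]
  calc ((Finset.univ.filter fun ε : Fin d → Bool =>
        t < |Real.sqrt (BDXaux.Qv (fun i j => B i j * x j) ε) - 1|).card : ℝ)
      ≤ 2 ^ d * (4 * Real.exp (-t ^ 2
          / (64 * (Real.sqrt (∑ j, x j ^ 4) * (norm24 B) ^ 2)))) := hT
    _ = 4 * Real.exp (-t ^ 2
          / (64 * (Real.sqrt (∑ j, x j ^ 4) * (norm24 B) ^ 2))) * 2 ^ d := by ring
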